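/- arXiv:2102.04826 — 10 statements merged into one kernel-verified Lean document; each statement's English description precedes it below -/
import Mathlib

section
/- Let A and B be two nonzero polynomials over a finite field F_q with B(0) ≠ 0, and let α be chosen uniformly at random from an extension field F_{q^s}. Then the polynomials A(αX) and B(X) are coprime with probability at least 1 − deg(A)·deg(B)/q^s. -/
open Polynomial

theorem common_root_of_not_coprime' {F K : Type*} [Field F] [Field K] [Algebra F K]
    [IsAlgClosed K] (p q : F[X]) (hq : q ≠ 0) (h : ¬IsCoprime p q) :
    ∃ β : K, aeval β p = 0 ∧ aeval β q = 0 := by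
  classical
  by_cases hp : p = 0
  · subst hp
    rw [isCoprime_zero_left] at h
    have hdeg : q.degree ≠ 0 := fun hd => h (isUnit_iff_degree_eq_zero.mpr hd)
    obtain ⟨β, hβ⟩ := IsAlgClosed.exists_aeval_eq_zero K q hdeg
    exact ⟨β, by simp, hβ⟩
  · have hgu : ¬IsUnit (EuclideanDomain.gcd p q) :=
      fun hu => h (EuclideanDomain.gcd_isUnit_iff.mp hu)
    have hg0 : EuclideanDomain.gcd p q ≠ 0 :=
      fun h0 => hp ((EuclideanDomain.gcd_eq_zero_iff).mp h0).1
    have hdeg : (EuclideanDomain.gcd p q).degree ≠ 0 :=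
      fun hd => hgu (isUnit_iff_degree_eq_zero.mpr hd)
    obtain ⟨β, hβ⟩ := IsAlgClosed.exists_aeval_eq_zero K _ hdeg
    obtain ⟨c, hc⟩ := EuclideanDomain.gcd_dvd_left p q
    obtain ⟨d, hd⟩ := EuclideanDomain.gcd_dvd_right p q
    exact ⟨β, by rw [hc, map_mul, hβ, zero_mul], by rw [hd, map_mul, hβ, zero_mul]⟩

theorem stmt0 {Fq Fqs : Type*} [Field Fq] [Fintype Fq] [Field Fqs] [Fintype Fqs]
    [Algebra Fq Fqs] (A B : Fq[X]) (hA : A ≠ 0) (hB : B ≠ 0) (hB0 : B.eval 0 ≠ 0) :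
    1 - (A.natDegree * B.natDegree : ℝ) / (Fintype.card Fqs) ≤
      (Nat.card {α : Fqs // IsCoprime ((A.map (algebraMap Fq Fqs)).comp (C α * X))
          (B.map (algebraMap Fq Fqs))} : ℝ) / (Fintype.card Fqs) := by
  classical
  set φ := algebraMap Fq Fqs with hφ
  set A' := A.map φ with hA'
  set B' := B.map φ with hB'
  have hA'0 : A' ≠ 0 := by
    simpa [hA'] using (Polynomial.map_ne_zero_iff φ.injective).mpr hA
  have hB'0 : B' ≠ 0 := by
    simpa [hB'] using (Polynomial.map_ne_zero_iff φ.injective).mpr hB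
  let K := AlgebraicClosure Fqs
  set ψ := algebraMap Fqs K with hψ
  have hAψ : A'.map ψ ≠ 0 := (Polynomial.map_ne_zero_iff ψ.injective).mpr hA'0
  have hBψ : B'.map ψ ≠ 0 := (Polynomial.map_ne_zero_iff ψ.injective).mpr hB'0
  set RA := ((A'.map ψ).roots.toFinset : Finset K) with hRA
  set RB := ((B'.map ψ).roots.toFinset : Finset K) with hRB
  set bad := Finset.univ.filter fun α : Fqs => ¬ IsCoprime (A'.comp (C α * X)) B' with hbad
  set good := Finset.univ.filter fun α : Fqs => IsCoprime (A'.comp (C α * X)) B' with hgood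
  -- choose a common root for each bad α
  have hchoice : ∀ α : Fqs, ∃ β : K, ¬ IsCoprime (A'.comp (C α * X)) B' →
      aeval β (A'.comp (C α * X)) = 0 ∧ aeval β B' = 0 := by
    intro α
    by_cases h : IsCoprime (A'.comp (C α * X)) B'
    · exact ⟨0, fun h' => absurd h h'⟩
    · obtain ⟨β, h1, h2⟩ := common_root_of_not_coprime' (K := K) _ _ hB'0 h
      exact ⟨β, fun _ => ⟨h1, h2⟩⟩
  choose β hβ using hchoice
  have hbne : ∀ α : Fqs, α ∈ bad → β α ≠ 0 := by
    intro α hα hb0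
    have hnc := (Finset.mem_filter.mp hα).2
    have h2 := (hβ α hnc).2
    rw [hb0] at h2
    have : aeval (0 : K) B' = ψ (B'.eval 0) := by
      rw [aeval_def, eval₂_at_zero, Polynomial.coeff_zero_eq_eval_zero]
    rw [this] at h2
    have hB'e : B'.eval 0 = φ (B.eval 0) := by
      rw [hB', Polynomial.eval_zero_map]
    exact hB0 (φ.injective (by
      rw [← hB'e]
      exact ψ.injective (by simpa using h2)))
  have hmaps : ∀ α ∈ bad, (ψ α * β α, β α) ∈ RA ×ˢ RB := by
    intro α hα
    have hnc := (Finset.mem_filter.mp hα).2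
    obtain ⟨h1, h2⟩ := hβ α hnc
    rw [aeval_comp] at h1
    have hx : aeval (β α) (C α * X) = ψ α * β α := by simp [hψ]
    rw [hx] at h1
    refine Finset.mem_product.mpr ⟨?_, ?_⟩
    · rw [hRA, Multiset.mem_toFinset, Polynomial.mem_roots hAψ]
      rwa [Polynomial.IsRoot, Polynomial.eval_map, ← aeval_def]
    · rw [hRB, Multiset.mem_toFinset, Polynomial.mem_roots hBψ]
      rwa [Polynomial.IsRoot, Polynomial.eval_map, ← aeval_def]
  have hinj : Set.InjOn (fun α : Fqs => (ψ α * β α, β α)) bad := by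
    intro a ha b hb hab
    simp only [Prod.mk.injEq] at hab
    obtain ⟨h1, h2⟩ := hab
    rw [h2] at h1
    have := mul_right_cancel₀ (hbne b hb) h1
    exact ψ.injective this
  have hcardbad : bad.card ≤ A.natDegree * B.natDegree := by
    calc bad.card ≤ (RA ×ˢ RB).card := Finset.card_le_card_of_injOn _ hmaps hinj
    _ = RA.card * RB.card := Finset.card_product _ _
    _ ≤ A.natDegree * B.natDegree := by
        apply Nat.mul_le_mul
        · calc RA.card ≤ (A'.map ψ).roots.card := Multiset.toFinset_card_le _
            _ ≤ (A'.map ψ).natDegree := Polynomial.card_roots' _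
            _ = A.natDegree := by
                rw [Polynomial.natDegree_map_eq_of_injective ψ.injective,
                  hA', Polynomial.natDegree_map_eq_of_injective φ.injective]
        · calc RB.card ≤ (B'.map ψ).roots.card := Multiset.toFinset_card_le _
            _ ≤ (B'.map ψ).natDegree := Polynomial.card_roots' _
            _ = B.natDegree := by
                rw [Polynomial.natDegree_map_eq_of_injective ψ.injective,
                  hB', Polynomial.natDegree_map_eq_of_injective φ.injective]
  have hsum : good.card + bad.card = Fintype.card Fqs := by
    rw [hgood, hbad]
    exact Finset.card_filter_add_card_filter_not _
  have hNat : Nat.card {α : Fqs // IsCoprime ((A.map (algebraMap Fq Fqs)).comp (C α * X))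
      (B.map (algebraMap Fq Fqs))} = good.card := by
    rw [Nat.card_eq_fintype_card, hgood]
    exact Fintype.card_subtype _
  rw [hNat]
  have hc : (0 : ℝ) < (Fintype.card Fqs : ℝ) := by
    exact_mod_cast Fintype.card_pos
  have hge : (Fintype.card Fqs : ℝ) - (A.natDegree * B.natDegree : ℝ) ≤ (good.card : ℝ) := by
    have h1 : (good.card : ℝ) = (Fintype.card Fqs : ℝ) - (bad.card : ℝ) := by
      have := hsum
      push_cast [← this]
      ring
    rw [h1]
    have : (bad.card : ℝ) ≤ (A.natDegree * B.natDegree : ℝ) := by exact_mod_cast hcardbad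
    linarith
  have : (1 : ℝ) - (A.natDegree * B.natDegree : ℝ) / (Fintype.card Fqs)
      = ((Fintype.card Fqs : ℝ) - (A.natDegree * B.natDegree : ℝ)) / (Fintype.card Fqs) := by
    field_simp
  rw [this]
  gcongr
end

section
/- Let G be a polynomial over a field K of degree m with G = 1 − X^k·G₁ where G₁ has degree m − k and k ≥ 1. Then for all t ≥ 1, the power series inverse of G truncated modulo X^{kt} has at most binomial(#G + t − 2, t − 1) nonzero monomials, which is at most (#G + t − 2)^{t−1}/(t−1)!. -/
open Polynomial

private lemma exists_multiset_of_coeff_pow_ne_zero {K : Type*} [Field K] {H : K[X]} :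
    ∀ (i : ℕ) (n : ℕ), (H ^ i).coeff n ≠ 0 →
      ∃ m : Multiset ℕ, Multiset.card m = i ∧ (∀ x ∈ m, x ∈ H.support) ∧ m.sum = n := by
  intro i
  induction i with
  | zero =>
    intro n h
    rw [pow_zero, coeff_one] at h
    refine ⟨0, by simp, by simp, ?_⟩
    simp only [Multiset.sum_zero]
    by_contra hn
    exact h (if_neg (Ne.symm hn))
  | succ i ih =>
    intro n h
    rw [pow_succ, coeff_mul] at h
    obtain ⟨p, hp, hpne⟩ := Finset.exists_ne_zero_of_sum_ne_zero h
    rw [Finset.HasAntidiagonal.mem_antidiagonal] at hp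
    have h1 : (H ^ i).coeff p.1 ≠ 0 := left_ne_zero_of_mul hpne
    have h2 : H.coeff p.2 ≠ 0 := right_ne_zero_of_mul hpne
    obtain ⟨m, hcard, hmem, hsum⟩ := ih p.1 h1
    refine ⟨p.2 ::ₘ m, by simp [hcard], ?_, by simp [hsum, hp, add_comm]⟩
    intro x hx
    rcases Multiset.mem_cons.1 hx with rfl | hx
    · exact mem_support_iff.2 h2
    · exact hmem x hx

theorem stmt4 {K : Type*} [Field K] (G G₁ : K[X]) (m k t : ℕ) (hk : 1 ≤ k) (ht : 1 ≤ t)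
    (hm : G.natDegree = m) (hG : G = 1 - X ^ k * G₁) (hG1 : G₁.natDegree = m - k) :
    (PowerSeries.trunc (k * t) ((G : PowerSeries K)⁻¹)).support.card ≤
      Nat.choose (G.support.card + t - 2) (t - 1) ∧
    (Nat.choose (G.support.card + t - 2) (t - 1) : ℝ) ≤
      ((G.support.card + t - 2 : ℕ) : ℝ) ^ (t - 1) / (Nat.factorial (t - 1)) := by
  set H : K[X] := X ^ k * G₁ with hHdef
  -- support of G
  have hH0 : H.coeff 0 = 0 := by
    rw [hHdef, mul_coeff_zero, coeff_X_pow, if_neg (by omega : ¬ (0 = k)), zero_mul]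
  have hsupp : G.support = insert 0 H.support := by
    ext n
    simp only [mem_support_iff, hG, coeff_sub, coeff_one, Finset.mem_insert, ← hHdef]
    rcases eq_or_ne n 0 with rfl | hn
    · simp [hH0]
    · simp [hn, mem_support_iff]
  -- invertibility
  have hG0 : PowerSeries.constantCoeff (G : PowerSeries K) = 1 := by
    rw [← PowerSeries.coeff_zero_eq_constantCoeff_apply, Polynomial.coeff_coe, hG]
    simp [← hHdef, hH0]
  have hinv : (G : PowerSeries K) * (G : PowerSeries K)⁻¹ = 1 :=
    PowerSeries.mul_inv_cancel _ (by rw [hG0]; exact one_ne_zero)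
  -- the geometric partial sum
  set P : K[X] := ∑ i ∈ Finset.range t, H ^ i with hPdef
  have hGP : G * P = 1 - H ^ t := by
    rw [hG, hPdef]
    linear_combination -geom_sum_mul H t
  -- coefficients of G⁻¹ below k*t agree with P
  have hdvd : (PowerSeries.X : PowerSeries K) ^ (k * t) ∣
      ((G : PowerSeries K)⁻¹ - (P : PowerSeries K)) := by
    refine ⟨(G : PowerSeries K)⁻¹ * (G₁ : PowerSeries K) ^ t, ?_⟩
    have h1 : ((G : PowerSeries K)⁻¹ - (P : PowerSeries K)) =
        (G : PowerSeries K)⁻¹ * ((1 : PowerSeries K) - (G : PowerSeries K) * P) := by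
      rw [mul_sub, mul_one, ← mul_assoc, mul_comm ((G : PowerSeries K)⁻¹) (G : PowerSeries K),
        hinv, one_mul]
    have h2 : ((G : PowerSeries K) * (P : PowerSeries K)) = ((G * P : K[X]) : PowerSeries K) := by
      push_cast; ring
    rw [h1, h2, hGP]
    push_cast
    rw [hHdef]
    push_cast
    rw [pow_mul]
    ring
  have hcoeff : ∀ n < k * t,
      PowerSeries.coeff n ((G : PowerSeries K)⁻¹) = PowerSeries.coeff n (P : PowerSeries K) := by
    intro n hn
    have := (PowerSeries.X_pow_dvd_iff.1 hdvd) n hn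
    rw [map_sub, sub_eq_zero] at this
    exact this
  have htr : PowerSeries.trunc (k * t) ((G : PowerSeries K)⁻¹) =
      PowerSeries.trunc (k * t) (P : PowerSeries K) := by
    ext n
    rw [PowerSeries.coeff_trunc, PowerSeries.coeff_trunc]
    split_ifs with h
    · exact hcoeff n h
    · rfl
  -- the counting set
  classical
  set g : Sym {x // x ∈ G.support} (t - 1) → ℕ :=
    fun s => ((s : Multiset {x // x ∈ G.support}).map Subtype.val).sum with hgdef
  have hsub : (PowerSeries.trunc (k * t) ((G : PowerSeries K)⁻¹)).support ⊆
      Finset.univ.image g := by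
    rw [htr]
    intro n hn
    rw [mem_support_iff, PowerSeries.coeff_trunc] at hn
    split_ifs at hn with hnlt
    swap
    · exact absurd rfl hn
    rw [Polynomial.coeff_coe, hPdef, finset_sum_coeff] at hn
    obtain ⟨i, hi, hine⟩ := Finset.exists_ne_zero_of_sum_ne_zero hn
    rw [Finset.mem_range] at hi
    obtain ⟨ms, hcard, hmem, hsum⟩ := exists_multiset_of_coeff_pow_ne_zero i n hine
    set ms' : Multiset ℕ := ms + Multiset.replicate (t - 1 - i) 0 with hms'
    have hcard' : Multiset.card ms' = t - 1 := by
      rw [hms', Multiset.card_add, Multiset.card_replicate, hcard]; omega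
    have hmem' : ∀ x ∈ ms', x ∈ G.support := by
      intro x hx
      rw [hms', Multiset.mem_add] at hx
      rcases hx with hx | hx
      · rw [hsupp]; exact Finset.mem_insert_of_mem (hmem x hx)
      · rw [Multiset.eq_of_mem_replicate hx, hsupp]; exact Finset.mem_insert_self _ _
    have hsum' : ms'.sum = n := by
      rw [hms', Multiset.sum_add, Multiset.sum_replicate, smul_zero, add_zero, hsum]
    refine Finset.mem_image.2 ⟨⟨ms'.pmap Subtype.mk hmem', by simp [hcard']⟩,
      Finset.mem_univ _, ?_⟩
    show (Multiset.map Subtype.val (ms'.pmap Subtype.mk hmem')).sum = n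
    rw [Multiset.map_pmap]
    simp [Multiset.pmap_eq_map, hsum']
  have hcount : (Finset.univ.image g).card ≤ Nat.choose (G.support.card + t - 2) (t - 1) := by
    refine (Finset.card_image_le).trans ?_
    rw [Finset.card_univ, Sym.card_sym_eq_choose]
    rw [Fintype.card_coe]
    have : G.support.card + (t - 1) - 1 = G.support.card + t - 2 := by omega
    rw [this]
  constructor
  · exact le_trans (Finset.card_le_card hsub) hcount
  · have := Nat.choose_le_pow_div (α := ℝ) (t - 1) (G.support.card + t - 2)
    simpa using this
end

section
/- Let G = 1 − X^k·G₁ over a field K with k ≥ 1, and let φ = 1/G ∈ K[[X]] be its power series inverse. Then for all t ≥ 1, the support of φ mod X^{kt} is contained in the set S = { e₁ + ⋯ + e_{t−1} : each e_j ∈ supp(G) } of sums of t−1 exponents from the support of G. -/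
open Polynomial

lemma pow_supp_aux {K : Type*} [CommSemiring K] (p : K[X]) :
    ∀ i : ℕ, ∀ e ∈ (p ^ i).support,
      ∃ g : Fin i → ℕ, (∀ j, g j ∈ p.support) ∧ e = ∑ j, g j := by
  intro i
  induction i with
  | zero =>
    intro e he
    rw [pow_zero] at he
    have h1 := Polynomial.mem_support_iff.mp he
    have he0 : e = 0 := by
      by_contra h
      simp [Polynomial.coeff_one, h] at h1
    exact ⟨Fin.elim0, fun j => j.elim0, by simp [he0]⟩
  | succ n ih =>
    intro e he
    rw [pow_succ] at he
    have hco := Polynomial.mem_support_iff.mp he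
    rw [Polynomial.coeff_mul] at hco
    obtain ⟨⟨a, b⟩, hmem, hne⟩ := Finset.exists_ne_zero_of_sum_ne_zero hco
    have hab : a + b = e := Finset.HasAntidiagonal.mem_antidiagonal.mp hmem
    have ha : a ∈ (p ^ n).support :=
      Polynomial.mem_support_iff.mpr (left_ne_zero_of_mul hne)
    have hb : b ∈ p.support :=
      Polynomial.mem_support_iff.mpr (right_ne_zero_of_mul hne)
    obtain ⟨g, hg, hsum⟩ := ih a ha
    refine ⟨Fin.snoc g b, ?_, ?_⟩
    · intro j
      refine Fin.lastCases ?_ ?_ j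
      · simpa using hb
      · intro j'; simpa using hg j'
    · rw [Fin.sum_univ_castSucc]
      simp [Fin.snoc_castSucc, ← hsum, hab]

theorem stmt5 {K : Type*} [Field K] (G G₁ : K[X]) (k t : ℕ) (hk : 1 ≤ k) (ht : 1 ≤ t)
    (hG : G = 1 - X ^ k * G₁) :
    ∀ e ∈ (PowerSeries.trunc (k * t) ((G : PowerSeries K)⁻¹)).support,
      ∃ f : Fin (t - 1) → ℕ, (∀ j, f j ∈ G.support) ∧ e = ∑ j, f j := by
  intro e he
  set h : K[X] := X ^ k * G₁ with hh
  set Sp : K[X] := ∑ i ∈ Finset.range t, h ^ i with hSp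
  set φ : PowerSeries K := (G : PowerSeries K)⁻¹ with hφ
  -- e < k*t and coeff e φ ≠ 0
  have he' := Polynomial.mem_support_iff.mp he
  rw [PowerSeries.coeff_trunc] at he'
  have helt : e < k * t := by
    by_contra hlt
    simp [hlt] at he'
  have hne : (PowerSeries.coeff e) φ ≠ 0 := by
    simpa [helt] using he'
  -- G has constant coefficient 1
  have hG0 : G.coeff 0 = 1 := by
    have hk0 : (X ^ k * G₁ : K[X]).coeff 0 = 0 := by
      rw [Polynomial.mul_coeff_zero, Polynomial.coeff_X_pow]
      simp [Nat.ne_of_lt hk]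
    simp [hG, show h.coeff 0 = 0 from hk0]
  have hGc : (PowerSeries.constantCoeff) (G : PowerSeries K) ≠ 0 := by
    rw [← PowerSeries.coeff_zero_eq_constantCoeff_apply, Polynomial.coeff_coe, hG0]
    exact one_ne_zero
  have hinv : φ * (G : PowerSeries K) = 1 := PowerSeries.inv_mul_cancel _ hGc
  -- polynomial geometric identity
  have poly_key : G * Sp + h ^ t = 1 := by
    rw [hG, hSp]
    have := geom_sum_mul h t
    ring_nf
    ring_nf at this
    linear_combination -this
  -- cast to power series
  have cast_key : (G : PowerSeries K) * (Sp : PowerSeries K) + ((h : PowerSeries K)) ^ t = 1 := by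
    have := congrArg (fun p : K[X] => (p : PowerSeries K)) poly_key
    push_cast at this
    simpa using this
  have hdecomp : φ = (Sp : PowerSeries K) + φ * ((h : PowerSeries K)) ^ t := by
    calc φ = φ * ((G : PowerSeries K) * (Sp : PowerSeries K) + ((h : PowerSeries K)) ^ t) := by
            rw [cast_key, mul_one]
      _ = (φ * (G : PowerSeries K)) * (Sp : PowerSeries K) + φ * ((h : PowerSeries K)) ^ t := by
            ring
      _ = (Sp : PowerSeries K) + φ * ((h : PowerSeries K)) ^ t := by rw [hinv, one_mul]
  -- the tail has no coefficients below k*t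
  have hdvd : (PowerSeries.X : PowerSeries K) ^ (k * t) ∣ φ * ((h : PowerSeries K)) ^ t := by
    have : (PowerSeries.X : PowerSeries K) ^ (k * t) ∣ ((h : PowerSeries K)) ^ t := by
      have : ((h : PowerSeries K)) ^ t = (PowerSeries.X) ^ (k * t) * ((G₁ : K[X]) : PowerSeries K) ^ t := by
        rw [hh]
        push_cast
        rw [mul_pow, ← pow_mul]
      exact ⟨_, this.trans rfl⟩
    exact this.mul_left φ
  have htail : (PowerSeries.coeff e) (φ * ((h : PowerSeries K)) ^ t) = 0 :=
    (PowerSeries.X_pow_dvd_iff.mp hdvd) e helt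
  -- so e is in the support of Sp
  have hcoeff : Sp.coeff e ≠ 0 := by
    have : (PowerSeries.coeff e) φ = Sp.coeff e := by
      rw [hdecomp, map_add, htail, add_zero, Polynomial.coeff_coe]
    rwa [this] at hne
  -- find i < t with e in support of h^i
  have hex : ∃ i ∈ Finset.range t, e ∈ (h ^ i).support := by
    by_contra hcon
    push_neg at hcon
    apply hcoeff
    rw [hSp, Polynomial.finset_sum_coeff]
    refine Finset.sum_eq_zero fun i hi => ?_
    exact Polynomial.notMem_support_iff.mp (hcon i hi)
  obtain ⟨i, hi, hei⟩ := hex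
  have hit : i ≤ t - 1 := Nat.le_sub_one_of_lt (Finset.mem_range.mp hi)
  obtain ⟨g, hg, hsum⟩ := pow_supp_aux h i e hei
  -- support of h is contained in support of G, and 0 ∈ support of G
  have hsuppG : ∀ m ∈ h.support, m ∈ G.support := by
    intro m hm
    have hm' := Polynomial.mem_support_iff.mp hm
    have hm0 : m ≠ 0 := by
      intro h0
      apply hm'
      rw [h0, hh, Polynomial.mul_coeff_zero, Polynomial.coeff_X_pow]
      simp [Nat.ne_of_lt hk]
    rw [Polynomial.mem_support_iff, hG]
    simpa [Polynomial.coeff_one, hm0] using hm'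
  have h0G : (0 : ℕ) ∈ G.support := Polynomial.mem_support_iff.mpr (by rw [hG0]; exact one_ne_zero)
  -- pad g to length t - 1
  set g' : ℕ → ℕ := fun m => if hm : m < i then g ⟨m, hm⟩ else 0 with hg'
  refine ⟨fun j => g' (j : ℕ), ?_, ?_⟩
  · intro j
    by_cases hj : (j : ℕ) < i
    · simpa [hg', hj] using hsuppG _ (hg ⟨j, hj⟩)
    · simpa [hg', hj] using h0G
  · rw [hsum]
    have e1 : ∑ j : Fin i, g j = ∑ j : Fin i, g' (j : ℕ) :=
      Finset.sum_congr rfl fun j _ => by simp [hg', j.2]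
    rw [e1, Fin.sum_univ_eq_sum_range g' i, Fin.sum_univ_eq_sum_range g' (t - 1)]
    refine Finset.sum_subset (Finset.range_subset_range.mpr hit) fun x _ hx => ?_
    rw [Finset.mem_range] at hx
    push_neg at hx
    simp [hg', Nat.not_lt.mpr hx]
end

section
/- Let F and G be polynomials over a field of respective degrees m+n−1 and m, with G = X^m − G₀ where deg(G₀) ≤ m − k for some k ≥ 1. Then the quotient Q of the Euclidean division of F by G satisfies #Q ≤ #F·(#G + ⌈n/k⌉ − 2)^{⌈n/k⌉ − 1}/(⌈n/k⌉ − 1)!. -/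
open Polynomial

lemma aux_support_pow_subset {K : Type*} [Field K] (p : K[X]) :
    ∀ i, (p ^ i).support ⊆
      (Finset.univ : Finset (Sym {x // x ∈ p.support} i)).image
        (fun v : Sym {x // x ∈ p.support} i => ((v : Multiset {x // x ∈ p.support}).map Subtype.val).sum)
  | 0 => by
    intro x hx
    rw [pow_zero] at hx
    have hx0 : x = 0 := by
      by_contra h
      simp [Polynomial.mem_support_iff, Polynomial.coeff_one, h] at hx
    subst hx0
    exact Finset.mem_image.2 ⟨Sym.nil, Finset.mem_univ _, by simp⟩
  | (i+1) => by
    intro x hx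
    rw [pow_succ'] at hx
    have hc : (p * p ^ i).coeff x ≠ 0 := Polynomial.mem_support_iff.1 hx
    rw [Polynomial.coeff_mul] at hc
    obtain ⟨⟨a, b⟩, hab, hne⟩ := Finset.exists_ne_zero_of_sum_ne_zero hc
    have ha : a ∈ p.support := Polynomial.mem_support_iff.2 (left_ne_zero_of_mul hne)
    have hb : b ∈ (p ^ i).support := Polynomial.mem_support_iff.2 (right_ne_zero_of_mul hne)
    obtain ⟨v, -, hv⟩ := Finset.mem_image.1 (aux_support_pow_subset p i hb)
    refine Finset.mem_image.2 ⟨Sym.cons ⟨a, ha⟩ v, Finset.mem_univ _, ?_⟩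
    rw [Sym.coe_cons, Multiset.map_cons, Multiset.sum_cons, hv]
    exact Finset.HasAntidiagonal.mem_antidiagonal.1 hab

lemma aux_card_pow {K : Type*} [Field K] (p : K[X]) (i : ℕ) :
    (p ^ i).support.card ≤ Nat.multichoose p.support.card i := by
  calc (p ^ i).support.card ≤ _ := Finset.card_le_card (aux_support_pow_subset p i)
    _ ≤ (Finset.univ : Finset (Sym {x // x ∈ p.support} i)).card := Finset.card_image_le
    _ = Nat.multichoose p.support.card i := by
        rw [Finset.card_univ, Sym.card_sym_eq_multichoose, Fintype.card_coe]

lemma aux_support_sum {K : Type*} [Field K] {ι : Type*} [DecidableEq ι] (s : Finset ι) (f : ι → K[X]) :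
    (∑ i ∈ s, f i).support ⊆ s.biUnion fun i => (f i).support := by
  intro x hx
  rw [Polynomial.mem_support_iff, Polynomial.finset_sum_coeff] at hx
  obtain ⟨i, hi, hne⟩ := Finset.exists_ne_zero_of_sum_ne_zero hx
  exact Finset.mem_biUnion.2 ⟨i, hi, Polynomial.mem_support_iff.2 hne⟩

lemma aux_sum_multichoose (g : ℕ) : ∀ t, 1 ≤ t →
    ∑ i ∈ Finset.range t, Nat.multichoose g i = Nat.multichoose (g + 1) (t - 1) := by
  intro t
  induction t with
  | zero => omega
  | succ t ih =>
    intro _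
    rcases Nat.eq_zero_or_pos t with rfl | ht
    · simp [Nat.multichoose_zero_right]
    · obtain ⟨t', rfl⟩ : ∃ t', t = t' + 1 := ⟨t - 1, by omega⟩
      rw [Finset.sum_range_succ, ih (by omega)]
      simp only [Nat.add_sub_cancel]
      rw [Nat.multichoose_succ_succ]
      omega

open Polynomial

theorem stmt6 {K : Type*} [Field K] (F G G₀ : K[X]) (m n k : ℕ) (hk : 1 ≤ k)
    (hkm : k ≤ m) (hn : 1 ≤ n) (hF : F.natDegree = m + n - 1) (hGdeg : G.natDegree = m)
    (hG : G = X ^ m - G₀) (hG0 : G₀.natDegree ≤ m - k) :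
    ((F /ₘ G).support.card : ℝ) ≤ (F.support.card : ℝ) *
      ((G.support.card : ℝ) + (⌈(n : ℝ) / k⌉₊ : ℝ) - 2) ^ (⌈(n : ℝ) / k⌉₊ - 1) /
      (Nat.factorial (⌈(n : ℝ) / k⌉₊ - 1)) := by
  classical
  set t := ⌈(n : ℝ) / k⌉₊ with ht
  set Q := F /ₘ G with hQdef
  set R := F %ₘ G with hRdef
  have hm : 1 ≤ m := le_trans hk hkm
  have ht1 : 1 ≤ t := by
    rw [ht, Nat.one_le_ceil_iff]; positivity
  have htk : n ≤ t * k := by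
    have h1 : (n : ℝ) / k ≤ t := Nat.le_ceil _
    have hk0 : (0:ℝ) < k := by positivity
    rw [div_le_iff₀ hk0] at h1
    exact_mod_cast h1
  have hG0m : G₀.degree < (m : ℕ) := by
    calc G₀.degree ≤ (G₀.natDegree : WithBot ℕ) := degree_le_natDegree
      _ ≤ ((m - k : ℕ) : WithBot ℕ) := by exact_mod_cast hG0
      _ < ((m : ℕ) : WithBot ℕ) := by exact_mod_cast (by omega : m - k < m)
  have hGmonic : G.Monic := by rw [hG]; exact monic_X_pow_sub hG0m
  -- basic identity
  have hFid : F = (X ^ m - G₀) * Q + R := by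
    conv_lhs => rw [← modByMonic_add_div F G]
    rw [← hG]; ring
  have hXmQ : X ^ m * Q = (F - R) + G₀ * Q := by linear_combination -hFid
  -- unrolled identity
  have key : ∀ i, X ^ (i*m) * Q =
      (∑ j ∈ Finset.range i, X ^ (j*m) * G₀ ^ (i-1-j) * (F - R)) + G₀ ^ i * Q := by
    intro i
    induction i with
    | zero => simp
    | succ i ih =>
      have h1 : X ^ ((i+1)*m) * Q = X ^ m * (X ^ (i*m) * Q) := by
        rw [add_mul, one_mul, pow_add]; ring
      rw [h1, ih, mul_add, Finset.mul_sum]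
      have h2 : X ^ m * (G₀ ^ i * Q) = X ^ (0*m) * G₀ ^ i * (F - R) + G₀ ^ (i+1) * Q := by
        calc X ^ m * (G₀ ^ i * Q) = G₀ ^ i * (X ^ m * Q) := by ring
          _ = G₀ ^ i * ((F - R) + G₀ * Q) := by rw [hXmQ]
          _ = X ^ (0*m) * G₀ ^ i * (F - R) + G₀ ^ (i+1) * Q := by ring
      rw [h2]
      rw [Finset.sum_range_succ' (fun j => X ^ (j*m) * G₀ ^ (i+1-1-j) * (F - R)) i]
      have h3 : ∀ j, X ^ m * (X ^ (j*m) * G₀ ^ (i-1-j) * (F - R))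
          = X ^ ((j+1)*m) * G₀ ^ (i+1-1-(j+1)) * (F - R) := by
        intro j
        have e : i+1-1-(j+1) = i-1-j := by omega
        rw [e, add_mul, one_mul, pow_add]; ring
      rw [Finset.sum_congr rfl (fun j _ => h3 j)]
      have e0 : i + 1 - 1 - 0 = i := by omega
      simp only [e0]
      ring
  -- the sparse majorant S
  set S : K[X] := ∑ i ∈ Finset.range t, X ^ (i*m) * G₀ ^ (t-1-i) * F with hS
  have hQdeg : Q.natDegree ≤ n - 1 := by
    rw [hQdef, natDegree_divByMonic F hGmonic, hF, hGdeg]; omega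
  have hcoeff : ∀ j, S.coeff (j + t*m) = Q.coeff j := by
    intro j
    have hk1 := key t
    have hL : (X ^ (t*m) * Q).coeff (j + t*m) = Q.coeff j := coeff_X_pow_mul Q (t*m) j
    rw [hk1] at hL
    rw [coeff_add] at hL
    have hGQ : (G₀ ^ t * Q).coeff (j + t*m) = 0 := by
      apply coeff_eq_zero_of_natDegree_lt
      have b1 : (G₀ ^ t * Q).natDegree ≤ t * G₀.natDegree + Q.natDegree :=
        le_trans (natDegree_mul_le) (by gcongr; exact natDegree_pow_le)
      have b2 : t * G₀.natDegree ≤ t * (m - k) := Nat.mul_le_mul_left t hG0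
      have b3 : t * (m - k) + t * k = t * m := by rw [← Nat.mul_add]; congr 1; omega
      omega
    have hterm : ∀ i ∈ Finset.range t,
        (X ^ (i*m) * G₀ ^ (t-1-i) * (F - R)).coeff (j + t*m)
        = (X ^ (i*m) * G₀ ^ (t-1-i) * F).coeff (j + t*m) := by
      intro i hi
      rw [Finset.mem_range] at hi
      have hsplit : X ^ (i*m) * G₀ ^ (t-1-i) * (F - R)
          = X ^ (i*m) * G₀ ^ (t-1-i) * F - X ^ (i*m) * G₀ ^ (t-1-i) * R := by ring
      rw [hsplit, coeff_sub]
      have hRz : (X ^ (i*m) * G₀ ^ (t-1-i) * R).coeff (j + t*m) = 0 := by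
        by_cases hR0 : R = 0
        · simp [hR0]
        apply coeff_eq_zero_of_natDegree_lt
        have hRm : R.natDegree < m := by
          have hd := degree_modByMonic_lt F hGmonic
          have := natDegree_lt_natDegree hR0 hd
          rwa [hGdeg] at this
        have b1 : (X ^ (i*m) * G₀ ^ (t-1-i) * R).natDegree
            ≤ i*m + (t-1-i) * G₀.natDegree + R.natDegree := by
          refine le_trans natDegree_mul_le ?_
          gcongr
          refine le_trans natDegree_mul_le ?_
          gcongr
          · exact le_of_eq (natDegree_X_pow _)
          · exact natDegree_pow_le
        have b2 : (t-1-i) * G₀.natDegree ≤ (t-1-i) * m := by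
          gcongr; omega
        have b3 : i*m + (t-1-i) * m = (i + (t-1-i)) * m := by ring
        have b4 : (i + (t-1-i)) * m ≤ (t-1) * m := by gcongr; omega
        have b5 : (t-1) * m + m = t * m := by
          have e : t - 1 + 1 = t := by omega
          calc (t-1) * m + m = ((t-1)+1) * m := by ring
            _ = t * m := by rw [e]
        omega
      rw [hRz, sub_zero]
    rw [finset_sum_coeff, Finset.sum_congr rfl hterm] at hL
    rw [hS, finset_sum_coeff]
    rw [hGQ, add_zero] at hL
    exact hL
  -- counting
  have hc1 : Q.support.card ≤ S.support.card := by
    apply Finset.card_le_card_of_injOn (fun j => j + t*m)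
    · intro j hj
      simp only [Finset.mem_coe, mem_support_iff] at hj ⊢
      rw [hcoeff j]; exact hj
    · intro a _ b _ hab
      simpa using hab
  have hc2 : S.support.card ≤
      ∑ i ∈ Finset.range t, Nat.multichoose G₀.support.card (t-1-i) * F.support.card := by
    refine le_trans (le_trans (Finset.card_le_card (aux_support_sum _ _))
      Finset.card_biUnion_le) ?_
    apply Finset.sum_le_sum
    intro i _
    calc (X ^ (i*m) * G₀ ^ (t-1-i) * F).support.card
        ≤ (X ^ (i*m) * G₀ ^ (t-1-i)).support.card * F.support.card := card_support_mul_le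
      _ ≤ ((X ^ (i*m) : K[X]).support.card * (G₀ ^ (t-1-i)).support.card) * F.support.card := by
          gcongr
          exact card_support_mul_le
      _ ≤ Nat.multichoose G₀.support.card (t-1-i) * F.support.card := by
          rw [support_X_pow (i*m), Finset.card_singleton, one_mul]
          gcongr
          exact aux_card_pow G₀ (t-1-i)
  have hsum : ∑ i ∈ Finset.range t, Nat.multichoose G₀.support.card (t-1-i) * F.support.card
      = Nat.multichoose (G₀.support.card + 1) (t-1) * F.support.card := by
    rw [Finset.sum_range_reflect (fun i => Nat.multichoose G₀.support.card i * F.support.card) t]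
    rw [← Finset.sum_mul, aux_sum_multichoose _ t ht1]
  have hm0 : G₀.coeff m = 0 := coeff_eq_zero_of_natDegree_lt (lt_of_le_of_lt hG0 (by omega))
  have hGsupp : G.support = insert m G₀.support := by
    ext x
    simp only [mem_support_iff, Finset.mem_insert, hG, coeff_sub, coeff_X_pow]
    by_cases hx : x = m
    · subst hx; simp [hm0]
    · simp [hx, sub_eq_zero]
  have hGcard : G.support.card = G₀.support.card + 1 := by
    rw [hGsupp, Finset.card_insert_of_notMem (notMem_support_iff.2 hm0)]
  have hQc : Q.support.card ≤ Nat.multichoose G.support.card (t-1) * F.support.card := by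
    rw [hGcard]
    exact le_trans hc1 (le_trans hc2 (le_of_eq hsum))
  -- pass to the reals
  set N := G.support.card + (t-1) - 1 with hN
  have hG1 : 1 ≤ G.support.card := by
    rw [hGcard]; omega
  have hN2 : N + 2 = G.support.card + t := by omega
  have hNcast : ((N : ℕ) : ℝ) = (G.support.card : ℝ) + (t : ℝ) - 2 := by
    have := congrArg (fun x : ℕ => (x : ℝ)) hN2
    push_cast at this
    linarith
  have hfacpos : (0:ℝ) < (Nat.factorial (t-1) : ℝ) := by
    exact_mod_cast Nat.factorial_pos _
  have hchoose : ((N.choose (t-1) : ℕ) : ℝ) ≤ ((N:ℕ):ℝ)^(t-1) / (Nat.factorial (t-1) : ℝ) := by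
    rw [le_div_iff₀ hfacpos]
    have h1 : N.choose (t-1) * Nat.factorial (t-1) ≤ N ^ (t-1) := by
      rw [mul_comm, ← Nat.descFactorial_eq_factorial_mul_choose]
      exact Nat.descFactorial_le_pow _ _
    exact_mod_cast h1
  calc ((F /ₘ G).support.card : ℝ)
      ≤ ((Nat.multichoose G.support.card (t-1) * F.support.card : ℕ) : ℝ) := by
        exact_mod_cast hQc
    _ = (F.support.card : ℝ) * ((N.choose (t-1) : ℕ) : ℝ) := by
        rw [Nat.multichoose_eq, ← hN]
        push_cast
        ring
    _ ≤ (F.support.card : ℝ) * (((N:ℕ):ℝ)^(t-1) / (Nat.factorial (t-1) : ℝ)) := by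
        apply mul_le_mul_of_nonneg_left hchoose
        exact Nat.cast_nonneg _
    _ = (F.support.card : ℝ) *
          ((G.support.card : ℝ) + (t : ℝ) - 2) ^ (t - 1) / (Nat.factorial (t-1) : ℝ) := by
        rw [hNcast, mul_div_assoc]
end

section
/- Let F and G be polynomials over a field of degrees m+n−1 and m respectively, with G = 1 − X^k·G₁, and suppose G divides F. Then the quotient Q = F/G has at most #F·(#G + ⌈n/k⌉ − 2)^{⌈n/k⌉ − 1}/(⌈n/k⌉ − 1)! nonzero monomials. -/
open Polynomial Finset

lemma support_pow_sum_aux {K : Type*} [CommSemiring K] (P : K[X]) :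
    ∀ (i : ℕ) (j : ℕ), j ∈ (P ^ i).support →
      ∃ m : Multiset ℕ, Multiset.card m = i ∧ (∀ a ∈ m, a ∈ P.support) ∧ m.sum = j := by
  intro i
  induction i with
  | zero =>
    intro j hj
    rw [pow_zero] at hj
    have h := Polynomial.mem_support_iff.mp hj
    rw [Polynomial.coeff_one] at h
    refine ⟨0, by simp, by simp, ?_⟩
    simp only [Multiset.sum_zero]
    by_contra hne
    exact h (if_neg (fun h' => hne h'.symm))
  | succ i ih =>
    intro j hj
    rw [pow_succ] at hj
    have h := Polynomial.mem_support_iff.mp hj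
    rw [Polynomial.coeff_mul] at h
    obtain ⟨x, hx, hne⟩ := Finset.exists_ne_zero_of_sum_ne_zero h
    have h1 : (P ^ i).coeff x.1 ≠ 0 := fun h0 => hne (by rw [h0, zero_mul])
    have h2 : P.coeff x.2 ≠ 0 := fun h0 => hne (by rw [h0, mul_zero])
    obtain ⟨m, hcard, hmem, hsum⟩ := ih x.1 (Polynomial.mem_support_iff.mpr h1)
    refine ⟨x.2 ::ₘ m, by simp [hcard], ?_, ?_⟩
    · intro a ha
      rcases Multiset.mem_cons.mp ha with rfl | ha
      · exact Polynomial.mem_support_iff.mpr h2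
      · exact hmem a ha
    · rw [Multiset.sum_cons, hsum]
      have := Finset.HasAntidiagonal.mem_antidiagonal.mp hx
      omega

lemma card_support_pow_le {K : Type*} [CommSemiring K] (P : K[X]) (i : ℕ) :
    (P ^ i).support.card ≤ (P.support.card + i - 1).choose i := by
  classical
  have key : (P ^ i).support ⊆
      Finset.image (fun m : Sym (↥P.support) i => ((m : Multiset ↥P.support).map Subtype.val).sum)
        Finset.univ := by
    intro j hj
    obtain ⟨m, hcard, hmem, hsum⟩ := support_pow_sum_aux P i j hj
    refine Finset.mem_image.mpr ⟨⟨m.attach.map (fun x => (⟨x.1, hmem x.1 x.2⟩ : ↥P.support)),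
      by simp [hcard]⟩, Finset.mem_univ _, ?_⟩
    simp only [Sym.coe_mk, Multiset.map_map, Function.comp]
    rw [Multiset.attach_map_val' m (fun a => a)]
    rw [Multiset.map_id', hsum]
  calc (P ^ i).support.card ≤ _ := Finset.card_le_card key
    _ ≤ Fintype.card (Sym (↥P.support) i) := by
        apply (Finset.card_image_le).trans; simp
    _ = (P.support.card + i - 1).choose i := by
        rw [Sym.card_sym_eq_choose, Fintype.card_coe]

lemma hockey (g : ℕ) : ∀ t : ℕ,
    ∑ i ∈ Finset.range (t + 1), (g + i - 1).choose i = (g + t).choose t := by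
  intro t
  induction t with
  | zero => simp
  | succ t ih =>
    rw [Finset.sum_range_succ, ih]
    have h1 : g + (t + 1) - 1 = g + t := by omega
    rw [h1, ← Nat.choose_succ_succ (g + t) t]
    congr 1

theorem stmt7 {K : Type*} [Field K] (F G G₁ Q : K[X]) (m n k : ℕ) (hk : 1 ≤ k)
    (hn : 1 ≤ n) (hF : F.natDegree = m + n - 1) (hGdeg : G.natDegree = m)
    (hG : G = 1 - X ^ k * G₁) (hQ : F = G * Q) :
    ((Q.support.card : ℝ)) ≤ (F.support.card : ℝ) *
      ((G.support.card : ℝ) + (⌈(n : ℝ) / k⌉₊ : ℝ) - 2) ^ (⌈(n : ℝ) / k⌉₊ - 1) /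
      (Nat.factorial (⌈(n : ℝ) / k⌉₊ - 1)) := by
  classical
  set t := ⌈(n : ℝ) / k⌉₊ with ht
  have hkR : (0:ℝ) < k := by exact_mod_cast hk
  have hnR : (0:ℝ) < n := by exact_mod_cast hn
  have ht1 : 1 ≤ t := Nat.one_le_ceil_iff.mpr (div_pos hnR hkR)
  -- constant coefficient of G is 1
  have hXG0 : (X ^ k * G₁ : K[X]).coeff 0 = 0 := by
    rw [mul_comm, Polynomial.coeff_mul_X_pow']
    rw [if_neg (by omega)]
  have hGconst : G.coeff 0 = 1 := by
    rw [hG, Polynomial.coeff_sub, hXG0, Polynomial.coeff_one]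
    simp
  have hG0 : G ≠ 0 := fun h => by simp [h] at hGconst
  have hGcard1 : 1 ≤ G.support.card :=
    Finset.card_pos.mpr (Polynomial.nonempty_support_iff.mpr hG0)
  -- #G₁ + 1 ≤ #G
  have hg : G₁.support.card + 1 ≤ G.support.card := by
    have hsub : insert 0 (G₁.support.image (· + k)) ⊆ G.support := by
      intro j hj
      rcases Finset.mem_insert.mp hj with rfl | hj
      · exact Polynomial.mem_support_iff.mpr (by rw [hGconst]; exact one_ne_zero)
      · obtain ⟨a, ha, rfl⟩ := Finset.mem_image.mp hj
        apply Polynomial.mem_support_iff.mpr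
        rw [hG, Polynomial.coeff_sub, Polynomial.coeff_one, Polynomial.coeff_X_pow_mul,
          if_neg (by omega)]
        simpa using Polynomial.mem_support_iff.mp ha
    have hcard := Finset.card_le_card hsub
    rwa [Finset.card_insert_of_notMem (by
        intro h0
        obtain ⟨a, _, ha⟩ := Finset.mem_image.mp h0
        omega),
      Finset.card_image_of_injective _ (add_left_injective k)] at hcard
  have hfa : (0:ℝ) < (Nat.factorial (t-1) : ℝ) := by exact_mod_cast Nat.factorial_pos _
  have hbase0 : (0:ℝ) ≤ (G.support.card : ℝ) + (t:ℝ) - 2 := by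
    have h1 : (1:ℝ) ≤ (G.support.card : ℝ) := by exact_mod_cast hGcard1
    have h2 : (1:ℝ) ≤ (t : ℝ) := by exact_mod_cast ht1
    linarith
  rcases eq_or_ne Q 0 with rfl | hQ0
  · simp only [Polynomial.support_zero, Finset.card_empty, Nat.cast_zero]
    apply div_nonneg _ hfa.le
    exact mul_nonneg (by positivity) (pow_nonneg hbase0 _)
  -- main case
  have hF0 : F ≠ 0 := hQ ▸ mul_ne_zero hG0 hQ0
  have hdQ : Q.natDegree = n - 1 := by
    have hmul := Polynomial.natDegree_mul hG0 hQ0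
    rw [← hQ, hF, hGdeg] at hmul
    omega
  have hnkt : n ≤ k * t := by
    have h := Nat.le_ceil ((n:ℝ)/k)
    rw [div_le_iff₀ hkR] at h
    have : (n:ℝ) ≤ ((k * t : ℕ) : ℝ) := by push_cast; linarith
    exact_mod_cast this
  set y : K[X] := X ^ k * G₁ with hy
  set S : K[X] := ∑ i ∈ Finset.range t, y ^ i with hS
  have key : F * S = Q - Q * y ^ t := by
    have hgs := geom_sum_mul y t
    rw [hQ, hG]
    linear_combination (-Q) * hgs
  have hsupp : Q.support ⊆ (F * S).support := by
    intro j hj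
    have hjle : j ≤ Q.natDegree := Polynomial.le_natDegree_of_ne_zero
      (Polynomial.mem_support_iff.mp hj)
    have hjlt : j < k * t := by omega
    apply Polynomial.mem_support_iff.mpr
    have hz : (Q * y ^ t).coeff j = 0 := by
      have hrw : Q * y ^ t = Q * G₁ ^ t * X ^ (k * t) := by
        rw [hy, mul_pow, ← pow_mul]; ring
      rw [hrw, Polynomial.coeff_mul_X_pow', if_neg (by omega)]
    rw [key, Polynomial.coeff_sub, hz, sub_zero]
    exact Polynomial.mem_support_iff.mp hj
  set g := G₁.support.card with hgdef
  have hFS : (F * S).support.card ≤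
      ∑ i ∈ Finset.range t, F.support.card * (g + i - 1).choose i := by
    have hFSsum : F * S = ∑ i ∈ Finset.range t, F * y ^ i := by rw [hS, Finset.mul_sum]
    have hsub2 : (F * S).support ⊆ (Finset.range t).biUnion (fun i => (F * y ^ i).support) := by
      intro j hj
      have hc := Polynomial.mem_support_iff.mp hj
      rw [hFSsum, Polynomial.finset_sum_coeff] at hc
      obtain ⟨i, hi, hne⟩ := Finset.exists_ne_zero_of_sum_ne_zero hc
      exact Finset.mem_biUnion.mpr ⟨i, hi, Polynomial.mem_support_iff.mpr hne⟩
    calc (F * S).support.card ≤ _ := Finset.card_le_card hsub2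
      _ ≤ ∑ i ∈ Finset.range t, (F * y ^ i).support.card := Finset.card_biUnion_le
      _ ≤ ∑ i ∈ Finset.range t, F.support.card * (g + i - 1).choose i := by
          apply Finset.sum_le_sum
          intro i _
          have hyi : (y ^ i).support.card ≤ (g + i - 1).choose i := by
            have h1 : y ^ i = X ^ (k * i) * G₁ ^ i := by
              rw [hy, mul_pow, ← pow_mul]
            calc (y ^ i).support.card
                ≤ (X ^ (k * i) : K[X]).support.card * (G₁ ^ i).support.card := by
                  rw [h1]; exact Polynomial.card_support_mul_le
              _ = (G₁ ^ i).support.card := by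
                  rw [Polynomial.support_X_pow (k * i)]
                  simp
              _ ≤ (g + i - 1).choose i := card_support_pow_le G₁ i
          calc (F * y ^ i).support.card
              ≤ F.support.card * (y ^ i).support.card := Polynomial.card_support_mul_le
            _ ≤ F.support.card * (g + i - 1).choose i := Nat.mul_le_mul_left _ hyi
  have hsum : ∑ i ∈ Finset.range t, F.support.card * (g + i - 1).choose i =
      F.support.card * (g + t - 1).choose (t - 1) := by
    rw [← Finset.mul_sum]
    congr 1
    have e : t = (t - 1) + 1 := by omega
    rw [e, hockey g (t - 1)]
    congr 1
  have hQcard : Q.support.card ≤ F.support.card * (g + t - 1).choose (t - 1) :=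
    (Finset.card_le_card hsupp).trans (hFS.trans_eq hsum)
  -- real arithmetic
  have hdesc : (t - 1).factorial * ((g + t - 1).choose (t - 1)) ≤ (g + t - 1) ^ (t - 1) := by
    rw [← Nat.descFactorial_eq_factorial_mul_choose]
    exact Nat.descFactorial_le_pow _ _
  have hbase : ((g + t - 1 : ℕ) : ℝ) ≤ (G.support.card : ℝ) + (t:ℝ) - 2 := by
    have h1 : ((g + t - 1 : ℕ) : ℝ) = (g : ℝ) + ((t - 1 : ℕ) : ℝ) := by
      have : g + t - 1 = g + (t - 1) := by omega
      rw [this]; push_cast; ring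
    have h2 : ((t - 1 : ℕ) : ℝ) = (t : ℝ) - 1 := by
      rw [Nat.cast_sub ht1]; simp
    have h3 : (g : ℝ) + 1 ≤ (G.support.card : ℝ) := by exact_mod_cast hg
    rw [h1, h2]; linarith
  have hC : ((g + t - 1).choose (t - 1) : ℝ) ≤
      ((G.support.card : ℝ) + (t:ℝ) - 2) ^ (t - 1) / (Nat.factorial (t - 1)) := by
    rw [le_div_iff₀ hfa]
    calc ((g + t - 1).choose (t - 1) : ℝ) * (Nat.factorial (t - 1)) 
        ≤ ((g + t - 1 : ℕ) : ℝ) ^ (t - 1) := by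
          rw [mul_comm]
          exact_mod_cast hdesc
      _ ≤ ((G.support.card : ℝ) + (t:ℝ) - 2) ^ (t - 1) :=
          pow_le_pow_left₀ (by positivity) hbase _
  calc ((Q.support.card : ℝ))
      ≤ (F.support.card : ℝ) * ((g + t - 1).choose (t - 1) : ℝ) := by exact_mod_cast hQcard
    _ ≤ (F.support.card : ℝ) *
        (((G.support.card : ℝ) + (t:ℝ) - 2) ^ (t - 1) / (Nat.factorial (t - 1))) :=
          mul_le_mul_of_nonneg_left hC (by positivity)
    _ = (F.support.card : ℝ) *
        ((G.support.card : ℝ) + (t:ℝ) - 2) ^ (t - 1) / (Nat.factorial (t - 1)) := by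
          rw [mul_div_assoc]
end

section
/- Let G be a polynomial over a field K of degree m with G = G₀ − X^k·G₁, where deg(G₀) < k and G(0) ≠ 0. Then for all t ≥ 1, the truncated power series G₀^t / G mod X^{tk} has at most (#G + t − 2)^{t−1}/(t−1)! nonzero monomials. -/
open Polynomial Finset

namespace Stmt8Aux

variable {K : Type*} [Field K]

lemma support_mul_mem {p q : K[X]} {x : ℕ} (hx : x ∈ (p * q).support) :
    ∃ a ∈ p.support, ∃ b ∈ q.support, a + b = x := by
  rw [mem_support_iff, Polynomial.coeff_mul] at hx
  obtain ⟨⟨a, b⟩, hmem, hne⟩ := Finset.exists_ne_zero_of_sum_ne_zero hx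
  rw [Finset.HasAntidiagonal.mem_antidiagonal] at hmem
  exact ⟨a, mem_support_iff.2 fun h => hne (by simp [h]), b,
    mem_support_iff.2 fun h => hne (by simp [h]), hmem⟩

/-- `Ok S j p` means every exponent in the support of `p` is a sum of a multiset of
size `j` with all elements in `S`. -/
def Ok (S : Finset ℕ) (j : ℕ) (p : K[X]) : Prop :=
  ∀ x ∈ p.support, ∃ m : Multiset ℕ, Multiset.card m = j ∧ (∀ a ∈ m, a ∈ S) ∧ m.sum = x

lemma Ok.mul {S : Finset ℕ} {j l : ℕ} {p q : K[X]} (hp : Ok S j p) (hq : Ok S l q) :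
    Ok S (j + l) (p * q) := by
  intro x hx
  obtain ⟨a, ha, b, hb, hab⟩ := support_mul_mem hx
  obtain ⟨m1, hc1, hm1, hs1⟩ := hp a ha
  obtain ⟨m2, hc2, hm2, hs2⟩ := hq b hb
  refine ⟨m1 + m2, by simp [hc1, hc2], ?_, by simp [hs1, hs2, hab]⟩
  intro y hy
  rcases Multiset.mem_add.1 hy with h | h
  exacts [hm1 _ h, hm2 _ h]

lemma ok_one (S : Finset ℕ) : Ok (K := K) S 0 1 := by
  intro x hx
  rw [mem_support_iff, Polynomial.coeff_one] at hx
  refine ⟨0, by simp, by simp, ?_⟩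
  simp only [Multiset.sum_zero]
  by_contra h
  exact hx (if_neg (by omega))

lemma ok_of_subset {S : Finset ℕ} {p : K[X]} (h : p.support ⊆ S) : Ok S 1 p :=
  fun x hx => ⟨{x}, by simp, by simpa using h hx, by simp⟩

lemma Ok.pow {S : Finset ℕ} {p : K[X]} (hp : Ok S 1 p) (i : ℕ) : Ok S i (p ^ i) := by
  induction i with
  | zero => simpa using ok_one S
  | succ n ih =>
    have := ih.mul hp
    rwa [← pow_succ] at this

lemma ps_coeff_X_pow_mul_of_lt (f : PowerSeries K) {n d : ℕ} (h : n < d) :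
    (PowerSeries.coeff n) (PowerSeries.X ^ d * f) = 0 := by
  rw [PowerSeries.coeff_mul]
  refine Finset.sum_eq_zero fun ⟨a, b⟩ hab => ?_
  rw [Finset.HasAntidiagonal.mem_antidiagonal] at hab
  have : a ≠ d := by omega
  rw [PowerSeries.coeff_X_pow, if_neg this, zero_mul]

end Stmt8Aux

open Stmt8Aux

theorem stmt8 {K : Type*} [Field K] (G G₀ G₁ : K[X]) (m k t : ℕ) (ht : 1 ≤ t)
    (hGdeg : G.natDegree = m) (hG : G = G₀ - X ^ k * G₁) (hG0 : G₀.natDegree < k)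
    (h0 : G.eval 0 ≠ 0) :
    ((PowerSeries.trunc (t * k)
        ((G₀ : PowerSeries K) ^ t * (G : PowerSeries K)⁻¹)).support.card : ℝ) ≤
      ((G.support.card + t - 2 : ℕ) : ℝ) ^ (t - 1) / (Nat.factorial (t - 1)) := by
  obtain ⟨s, rfl⟩ : ∃ s, t = s + 1 := ⟨t - 1, by omega⟩
  set S : Finset ℕ := G.support with hSdef
  -- support inclusions
  have hS0 : G₀.support ⊆ S := by
    intro a ha
    rw [mem_support_iff] at ha ⊢
    have hak : a < k := lt_of_le_of_lt (le_natDegree_of_ne_zero ha) hG0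
    rw [hG, coeff_sub, (commute_X_pow G₁ k).eq, Polynomial.coeff_mul_X_pow',
      if_neg (by omega)]
    simpa using ha
  have hS1 : (X ^ k * G₁ : K[X]).support ⊆ S := by
    intro x hx
    rw [mem_support_iff, (commute_X_pow G₁ k).eq, Polynomial.coeff_mul_X_pow'] at hx
    by_cases hkx : k ≤ x
    · rw [if_pos hkx] at hx
      rw [mem_support_iff, hG, coeff_sub, (commute_X_pow G₁ k).eq,
        Polynomial.coeff_mul_X_pow', if_pos hkx,
        Polynomial.coeff_eq_zero_of_natDegree_lt (lt_of_lt_of_le hG0 hkx), zero_sub]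
      simpa using hx
    · rw [if_neg hkx] at hx; exact absurd rfl hx
  -- the truncated polynomial
  set P : K[X] := ∑ i ∈ Finset.range (s + 1), (X ^ k * G₁) ^ i * G₀ ^ (s - i) with hPdef
  -- key polynomial identity
  have hGP : G * P = G₀ ^ (s + 1) - X ^ ((s + 1) * k) * G₁ ^ (s + 1) := by
    have key : ∀ i ∈ Finset.range (s + 1),
        G * ((X ^ k * G₁) ^ i * G₀ ^ (s - i)) =
          (fun i => (X ^ k * G₁) ^ i * G₀ ^ (s + 1 - i)) i -
          (fun i => (X ^ k * G₁) ^ i * G₀ ^ (s + 1 - i)) (i + 1) := by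
      intro i hi
      rw [Finset.mem_range] at hi
      have h1 : s - i + 1 = s + 1 - i := by omega
      have h2 : s + 1 - (i + 1) = s - i := by omega
      simp only [h2]
      calc G * ((X ^ k * G₁) ^ i * G₀ ^ (s - i))
          = (X ^ k * G₁) ^ i * (G₀ ^ (s - i) * G₀) -
            (X ^ k * G₁) ^ i * (X ^ k * G₁) * G₀ ^ (s - i) := by rw [hG]; ring
        _ = (X ^ k * G₁) ^ i * G₀ ^ (s + 1 - i) -
            (X ^ k * G₁) ^ (i + 1) * G₀ ^ (s - i) := by
            rw [← pow_succ, h1, ← pow_succ]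
    rw [hPdef, Finset.mul_sum, Finset.sum_congr rfl key, Finset.sum_range_sub']
    simp only [pow_zero, one_mul, Nat.add_sub_cancel, Nat.sub_zero]
    rw [Nat.sub_self, pow_zero, mul_one, mul_pow, ← pow_mul, mul_comm k (s + 1)]
  -- move to power series
  have hunit : (G : PowerSeries K) * (G : PowerSeries K)⁻¹ = 1 := by
    apply PowerSeries.mul_inv_cancel
    rwa [← PowerSeries.coeff_zero_eq_constantCoeff_apply, Polynomial.coeff_coe,
      Polynomial.coeff_zero_eq_eval_zero]
  have hGPps : (G : PowerSeries K) * (P : PowerSeries K)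
      = (G₀ : PowerSeries K) ^ (s + 1)
        - PowerSeries.X ^ ((s + 1) * k) * (G₁ : PowerSeries K) ^ (s + 1) := by
    rw [← Polynomial.coe_mul, hGP]
    push_cast [Polynomial.coe_sub, Polynomial.coe_mul, Polynomial.coe_pow, Polynomial.coe_X]
    ring
  have hmain : (G₀ : PowerSeries K) ^ (s + 1) * (G : PowerSeries K)⁻¹
      = (P : PowerSeries K)
        + PowerSeries.X ^ ((s + 1) * k) * ((G₁ : PowerSeries K) ^ (s + 1)
            * (G : PowerSeries K)⁻¹) := by
    have h1 : (G₀ : PowerSeries K) ^ (s + 1)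
        = (G : PowerSeries K) * (P : PowerSeries K)
          + PowerSeries.X ^ ((s + 1) * k) * (G₁ : PowerSeries K) ^ (s + 1) := by
      rw [hGPps]; ring
    calc (G₀ : PowerSeries K) ^ (s + 1) * (G : PowerSeries K)⁻¹
        = (P : PowerSeries K) * ((G : PowerSeries K) * (G : PowerSeries K)⁻¹)
          + PowerSeries.X ^ ((s + 1) * k) * ((G₁ : PowerSeries K) ^ (s + 1)
            * (G : PowerSeries K)⁻¹) := by rw [h1]; ring
      _ = _ := by rw [hunit, mul_one]
  -- support of the truncation is contained in the support of P
  have hsubP : (PowerSeries.trunc ((s + 1) * k)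
      ((G₀ : PowerSeries K) ^ (s + 1) * (G : PowerSeries K)⁻¹)).support ⊆ P.support := by
    intro x hx
    rw [mem_support_iff, PowerSeries.coeff_trunc] at hx
    by_cases hxk : x < (s + 1) * k
    · rw [if_pos hxk, hmain, map_add, ps_coeff_X_pow_mul_of_lt _ hxk, add_zero,
        Polynomial.coeff_coe] at hx
      exact mem_support_iff.2 hx
    · rw [if_neg hxk] at hx; exact absurd rfl hx
  -- Ok property for P
  have hOkP : Ok S s P := by
    intro x hx
    rw [mem_support_iff, hPdef, Polynomial.finset_sum_coeff] at hx
    obtain ⟨i, hi, hne⟩ := Finset.exists_ne_zero_of_sum_ne_zero hx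
    rw [Finset.mem_range] at hi
    have hok : Ok S (i + (s - i)) ((X ^ k * G₁) ^ i * G₀ ^ (s - i)) :=
      ((ok_of_subset hS1).pow i).mul ((ok_of_subset hS0).pow (s - i))
    have hieq : i + (s - i) = s := by omega
    rw [hieq] at hok
    exact hok x (mem_support_iff.2 hne)
  -- the target finset of sums
  classical
  set T : Finset ℕ :=
    Finset.image (fun v : Sym {x // x ∈ S} s => (v.1.map Subtype.val).sum) Finset.univ with hT
  have hPT : P.support ⊆ T := by
    intro x hx
    obtain ⟨mset, hc, hmem, hsum⟩ := hOkP x hx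
    rw [hT, Finset.mem_image]
    refine ⟨⟨mset.pmap (fun a h => (⟨a, h⟩ : {x // x ∈ S})) hmem, by simp [hc]⟩,
      Finset.mem_univ _, ?_⟩
    simp only [Multiset.map_pmap]
    rw [Multiset.pmap_eq_map (f := fun a : ℕ => a), Multiset.map_id']
    exact hsum
  have hcardT : T.card ≤ (S.card + s - 1).choose s := by
    calc T.card ≤ (Finset.univ : Finset (Sym {x // x ∈ S} s)).card := Finset.card_image_le
      _ = Fintype.card (Sym {x // x ∈ S} s) := Finset.card_univ
      _ = (Fintype.card {x // x ∈ S} + s - 1).choose s := Sym.card_sym_eq_choose s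
      _ = (S.card + s - 1).choose s := by rw [Fintype.card_coe]
  have hcard : (PowerSeries.trunc ((s + 1) * k)
      ((G₀ : PowerSeries K) ^ (s + 1) * (G : PowerSeries K)⁻¹)).support.card
      ≤ (S.card + s - 1).choose s :=
    le_trans (Finset.card_le_card (hsubP.trans hPT)) hcardT
  -- final numeric bound
  have heq : S.card + s - 1 = G.support.card + (s + 1) - 2 := by rw [hSdef]; omega
  have hts : s + 1 - 1 = s := by omega
  rw [hts, ← heq]
  calc ((PowerSeries.trunc ((s + 1) * k)
        ((G₀ : PowerSeries K) ^ (s + 1) * (G : PowerSeries K)⁻¹)).support.card : ℝ)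
      ≤ ((S.card + s - 1).choose s : ℝ) := by exact_mod_cast hcard
    _ ≤ ((S.card + s - 1 : ℕ) : ℝ) ^ s / (Nat.factorial s) := by
        have := Nat.choose_le_pow_div (α := ℝ) s (S.card + s - 1)
        simpa using this
end

section
/- Let F, G, Q be sparse polynomials over the integers with F = Q·G, and write Q = Σ_{i=1}^{T} q_i X^{e_i} with T nonzero terms. Then the height of Q satisfies ‖Q‖ ≤ (‖G‖ + 1)^{⌈(T−1)/2⌉} · ‖F‖. -/
open Polynomial

/-- The height of an integer polynomial: the maximum absolute value of its
coefficients. -/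
def heightZ (P : Polynomial ℤ) : ℕ := P.support.sup fun i => (P.coeff i).natAbs

open Finset

lemma abs_coeff_le_heightZ (P : Polynomial ℤ) (n : ℕ) :
    |P.coeff n| ≤ (heightZ P : ℤ) := by
  by_cases h : n ∈ P.support
  · have := Finset.le_sup (f := fun i => (P.coeff i).natAbs) h
    rw [Int.abs_eq_natAbs]
    exact_mod_cast this
  · simp [Polynomial.notMem_support_iff.mp h]

lemma geomZ (B : ℤ) : ∀ m : ℕ, 1 + B * ∑ j ∈ Finset.range m, (B+1)^j = (B+1)^m := by
  intro m
  induction m with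
  | zero => simp
  | succ m ih =>
    rw [Finset.sum_range_succ, pow_succ]
    ring_nf
    ring_nf at ih
    linarith [ih]

lemma low_bound (F G Q : Polynomial ℤ) (hG : G ≠ 0) (hFQ : F = Q * G) (e : ℕ) :
    |Q.coeff e| ≤ (heightZ F : ℤ) *
      ((heightZ G : ℤ) + 1) ^ ((Q.support.filter (· < e)).card) := by
  induction e using Nat.strong_induction_on with
  | _ e IH =>
  set A : ℤ := (heightZ F : ℤ) with hA
  set B : ℤ := (heightZ G : ℤ) with hB
  have hA0 : 0 ≤ A := by positivity
  have hB0 : 0 ≤ B := by positivity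
  by_cases hqe : Q.coeff e = 0
  · rw [hqe]; positivity
  have heS : e ∈ Q.support := Polynomial.mem_support_iff.mpr hqe
  set t := G.natTrailingDegree with ht
  set n := e + t with hn
  set s₀ : Finset ℕ := Q.support.filter (· < e) with hs₀
  set m := s₀.card with hm
  have key : F.coeff n = ∑ k ∈ Finset.range (n+1), Q.coeff k * G.coeff (n - k) := by
    rw [hFQ, Polynomial.coeff_mul, Finset.Nat.sum_antidiagonal_eq_sum_range_succ_mk]
  have hsub : insert e s₀ ⊆ Finset.range (n+1) := by
    intro k hk
    rcases Finset.mem_insert.mp hk with h | h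
    · simp [h, hn]
    · have := (Finset.mem_filter.mp h).2
      simp only [Finset.mem_range]; omega
  have key2 : F.coeff n = ∑ k ∈ insert e s₀, Q.coeff k * G.coeff (n - k) := by
    rw [key]
    refine (Finset.sum_subset hsub ?_).symm
    intro k hk hks
    have hkn : k ≤ n := by have := Finset.mem_range.mp hk; omega
    rcases lt_trichotomy k e with h | h | h
    · have hkS : k ∉ Q.support := fun hc =>
        hks (Finset.mem_insert_of_mem (Finset.mem_filter.mpr ⟨hc, h⟩))
      rw [Polynomial.notMem_support_iff.mp hkS, zero_mul]
    · exact absurd (h ▸ Finset.mem_insert_self e s₀) hks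
    · have : n - k < t := by omega
      rw [Polynomial.coeff_eq_zero_of_lt_natTrailingDegree this, mul_zero]
  have heNot : e ∉ s₀ := by simp [hs₀]
  have hne : n - e = t := by omega
  have key3 : Q.coeff e * G.coeff t =
      F.coeff n - ∑ k ∈ s₀, Q.coeff k * G.coeff (n - k) := by
    rw [key2, Finset.sum_insert heNot, hne]; ring
  have hgt : 1 ≤ |G.coeff t| := by
    have : G.coeff t ≠ 0 := by
      rw [ht, ← Polynomial.trailingCoeff]
      exact fun h => hG (Polynomial.trailingCoeff_eq_zero.mp h)
    exact Int.one_le_abs this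
  -- counting function
  set c : ℕ → ℕ := fun k => (Q.support.filter (· < k)).card with hc
  have hmono : ∀ k₁ ∈ Q.support, ∀ k₂ ∈ Q.support, k₁ < k₂ → c k₁ < c k₂ := by
    intro k₁ h₁ k₂ h₂ hlt
    apply Finset.card_lt_card
    constructor
    · intro x hx
      have := Finset.mem_filter.mp hx
      exact Finset.mem_filter.mpr ⟨this.1, lt_trans this.2 hlt⟩
    · intro hcon
      have : k₁ ∈ Q.support.filter (· < k₁) :=
        hcon (Finset.mem_filter.mpr ⟨h₁, hlt⟩)
      simp at this
    -- injectivity + range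
  have hclt : ∀ k ∈ s₀, c k < m := by
    intro k hk
    have := Finset.mem_filter.mp hk
    exact hmono k this.1 e heS this.2
  have hinj : ∀ x ∈ s₀, ∀ y ∈ s₀, c x = c y → x = y := by
    intro x hx y hy hxy
    rcases lt_trichotomy x y with h | h | h
    · exact absurd hxy (Nat.ne_of_lt (hmono x (Finset.mem_filter.mp hx).1 y
        (Finset.mem_filter.mp hy).1 h))
    · exact h
    · exact absurd hxy.symm (Nat.ne_of_lt (hmono y (Finset.mem_filter.mp hy).1 x
        (Finset.mem_filter.mp hx).1 h))
  -- chain of bounds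
  have step1 : |Q.coeff e| ≤ |Q.coeff e * G.coeff t| := by
    rw [abs_mul]
    nlinarith [abs_nonneg (Q.coeff e)]
  have step2 : |Q.coeff e * G.coeff t| ≤ A + ∑ k ∈ s₀, |Q.coeff k| * B := by
    rw [key3]
    calc |F.coeff n - ∑ k ∈ s₀, Q.coeff k * G.coeff (n - k)|
        ≤ |F.coeff n| + |∑ k ∈ s₀, Q.coeff k * G.coeff (n - k)| := abs_sub _ _
      _ ≤ A + ∑ k ∈ s₀, |Q.coeff k| * B := by
          gcongr
          · exact abs_coeff_le_heightZ F n
          · calc |∑ k ∈ s₀, Q.coeff k * G.coeff (n - k)|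
                ≤ ∑ k ∈ s₀, |Q.coeff k * G.coeff (n - k)| :=
                  Finset.abs_sum_le_sum_abs _ _
              _ ≤ ∑ k ∈ s₀, |Q.coeff k| * B := by
                  apply Finset.sum_le_sum
                  intro k hk
                  rw [abs_mul]
                  exact mul_le_mul_of_nonneg_left (abs_coeff_le_heightZ G _)
                    (abs_nonneg _)
  have step3 : ∑ k ∈ s₀, |Q.coeff k| * B ≤ A * B * ∑ k ∈ s₀, (B+1)^(c k) := by
    rw [Finset.mul_sum]
    apply Finset.sum_le_sum
    intro k hk
    have hkIH : |Q.coeff k| ≤ A * (B+1)^(c k) := IH k (Finset.mem_filter.mp hk).2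
    calc |Q.coeff k| * B ≤ (A * (B+1)^(c k)) * B :=
          mul_le_mul_of_nonneg_right hkIH hB0
      _ = A * B * (B+1)^(c k) := by ring
  have step4 : ∑ k ∈ s₀, (B+1)^(c k) ≤ ∑ j ∈ Finset.range m, (B+1)^j := by
    have himg : ∑ k ∈ s₀, (B+1)^(c k) = ∑ j ∈ s₀.image c, (B+1)^j :=
      (Finset.sum_image (f := fun j => (B+1)^j) hinj).symm
    rw [himg]
    apply Finset.sum_le_sum_of_subset_of_nonneg
    · intro j hj
      obtain ⟨k, hk, rfl⟩ := Finset.mem_image.mp hj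
      exact Finset.mem_range.mpr (hclt k hk)
    · intro j _ _; positivity
  have geom := geomZ B m
  calc |Q.coeff e| ≤ A + A * B * ∑ j ∈ Finset.range m, (B+1)^j := by
        have h4 : A * B * ∑ k ∈ s₀, (B+1)^(c k) ≤
            A * B * ∑ j ∈ Finset.range m, (B+1)^j := by
          apply mul_le_mul_of_nonneg_left step4 (by positivity)
        linarith [step1, step2, step3]
    _ = A * (1 + B * ∑ j ∈ Finset.range m, (B+1)^j) := by ring
    _ = A * (B+1)^m := by rw [geom]

lemma high_bound (F G Q : Polynomial ℤ) (hG : G ≠ 0) (hFQ : F = Q * G) (N : ℕ) :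
    ∀ e : ℕ, (Q.support.filter (fun k => e < k)).card ≤ N →
      |Q.coeff e| ≤ (heightZ F : ℤ) *
        ((heightZ G : ℤ) + 1) ^ ((Q.support.filter (fun k => e < k)).card) := by
  induction N using Nat.strong_induction_on with
  | _ N IH =>
  intro e hN
  set A : ℤ := (heightZ F : ℤ) with hA
  set B : ℤ := (heightZ G : ℤ) with hB
  have hA0 : 0 ≤ A := by positivity
  have hB0 : 0 ≤ B := by positivity
  by_cases hqe : Q.coeff e = 0
  · rw [hqe]; positivity
  have heS : e ∈ Q.support := Polynomial.mem_support_iff.mpr hqe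
  set D := G.natDegree with hD
  set n := e + D with hn
  set c : ℕ → ℕ := fun k => (Q.support.filter (fun x => k < x)).card with hc
  set m := c e with hm
  set s₀ : Finset ℕ := Q.support.filter (fun k => e < k ∧ k ≤ n) with hs₀
  have key : F.coeff n = ∑ k ∈ Finset.range (n+1), Q.coeff k * G.coeff (n - k) := by
    rw [hFQ, Polynomial.coeff_mul, Finset.Nat.sum_antidiagonal_eq_sum_range_succ_mk]
  have hsub : insert e s₀ ⊆ Finset.range (n+1) := by
    intro k hk
    rcases Finset.mem_insert.mp hk with h | h
    · simp only [Finset.mem_range, h]; omega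
    · have := (Finset.mem_filter.mp h).2
      simp only [Finset.mem_range]; omega
  have key2 : F.coeff n = ∑ k ∈ insert e s₀, Q.coeff k * G.coeff (n - k) := by
    rw [key]
    refine (Finset.sum_subset hsub ?_).symm
    intro k hk hks
    have hkn : k ≤ n := by have := Finset.mem_range.mp hk; omega
    rcases lt_trichotomy k e with h | h | h
    · have : D < n - k := by omega
      rw [Polynomial.coeff_eq_zero_of_natDegree_lt this, mul_zero]
    · exact absurd (h ▸ Finset.mem_insert_self e s₀) hks
    · have hkS : k ∉ Q.support := fun hc' =>
        hks (Finset.mem_insert_of_mem (Finset.mem_filter.mpr ⟨hc', h, hkn⟩))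
      rw [Polynomial.notMem_support_iff.mp hkS, zero_mul]
  have heNot : e ∉ s₀ := by simp [hs₀]
  have hne : n - e = D := by omega
  have key3 : Q.coeff e * G.coeff D =
      F.coeff n - ∑ k ∈ s₀, Q.coeff k * G.coeff (n - k) := by
    rw [key2, Finset.sum_insert heNot, hne]; ring
  have hgt : 1 ≤ |G.coeff D| := by
    have : G.coeff D ≠ 0 := by
      rw [hD, Polynomial.coeff_natDegree]
      exact Polynomial.leadingCoeff_ne_zero.mpr hG
    exact Int.one_le_abs this
  have hmono : ∀ k₁ ∈ Q.support, ∀ k₂ ∈ Q.support, k₁ < k₂ → c k₂ < c k₁ := by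
    intro k₁ h₁ k₂ h₂ hlt
    apply Finset.card_lt_card
    constructor
    · intro x hx
      have := Finset.mem_filter.mp hx
      exact Finset.mem_filter.mpr ⟨this.1, lt_trans hlt this.2⟩
    · intro hcon
      have : k₂ ∈ Q.support.filter (fun x => k₂ < x) :=
        hcon (Finset.mem_filter.mpr ⟨h₂, hlt⟩)
      simp at this
  have hclt : ∀ k ∈ s₀, c k < m := by
    intro k hk
    have hk' := Finset.mem_filter.mp hk
    exact hmono e heS k hk'.1 hk'.2.1
  have hinj : ∀ x ∈ s₀, ∀ y ∈ s₀, c x = c y → x = y := by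
    intro x hx y hy hxy
    rcases lt_trichotomy x y with h | h | h
    · exact absurd hxy.symm (Nat.ne_of_lt (hmono x (Finset.mem_filter.mp hx).1 y
        (Finset.mem_filter.mp hy).1 h))
    · exact h
    · exact absurd hxy (Nat.ne_of_lt (hmono y (Finset.mem_filter.mp hy).1 x
        (Finset.mem_filter.mp hx).1 h))
  have step1 : |Q.coeff e| ≤ |Q.coeff e * G.coeff D| := by
    rw [abs_mul]
    nlinarith [abs_nonneg (Q.coeff e)]
  have step2 : |Q.coeff e * G.coeff D| ≤ A + ∑ k ∈ s₀, |Q.coeff k| * B := by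
    rw [key3]
    calc |F.coeff n - ∑ k ∈ s₀, Q.coeff k * G.coeff (n - k)|
        ≤ |F.coeff n| + |∑ k ∈ s₀, Q.coeff k * G.coeff (n - k)| := abs_sub _ _
      _ ≤ A + ∑ k ∈ s₀, |Q.coeff k| * B := by
          gcongr
          · exact abs_coeff_le_heightZ F n
          · calc |∑ k ∈ s₀, Q.coeff k * G.coeff (n - k)|
                ≤ ∑ k ∈ s₀, |Q.coeff k * G.coeff (n - k)| :=
                  Finset.abs_sum_le_sum_abs _ _
              _ ≤ ∑ k ∈ s₀, |Q.coeff k| * B := by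
                  apply Finset.sum_le_sum
                  intro k hk
                  rw [abs_mul]
                  exact mul_le_mul_of_nonneg_left (abs_coeff_le_heightZ G _)
                    (abs_nonneg _)
  have step3 : ∑ k ∈ s₀, |Q.coeff k| * B ≤ A * B * ∑ k ∈ s₀, (B+1)^(c k) := by
    rw [Finset.mul_sum]
    apply Finset.sum_le_sum
    intro k hk
    have hkm : c k < N := lt_of_lt_of_le (hclt k hk) hN
    have hkIH : |Q.coeff k| ≤ A * (B+1)^(c k) := IH (c k) hkm k le_rfl
    calc |Q.coeff k| * B ≤ (A * (B+1)^(c k)) * B :=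
          mul_le_mul_of_nonneg_right hkIH hB0
      _ = A * B * (B+1)^(c k) := by ring
  have step4 : ∑ k ∈ s₀, (B+1)^(c k) ≤ ∑ j ∈ Finset.range m, (B+1)^j := by
    have himg : ∑ k ∈ s₀, (B+1)^(c k) = ∑ j ∈ s₀.image c, (B+1)^j :=
      (Finset.sum_image (f := fun j => (B+1)^j) hinj).symm
    rw [himg]
    apply Finset.sum_le_sum_of_subset_of_nonneg
    · intro j hj
      obtain ⟨k, hk, rfl⟩ := Finset.mem_image.mp hj
      exact Finset.mem_range.mpr (hclt k hk)
    · intro j _ _; positivity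
  have geom := geomZ B m
  calc |Q.coeff e| ≤ A + A * B * ∑ j ∈ Finset.range m, (B+1)^j := by
        have h4 : A * B * ∑ k ∈ s₀, (B+1)^(c k) ≤
            A * B * ∑ j ∈ Finset.range m, (B+1)^j := by
          apply mul_le_mul_of_nonneg_left step4 (by positivity)
        linarith [step1, step2, step3]
    _ = A * (1 + B * ∑ j ∈ Finset.range m, (B+1)^j) := by ring
    _ = A * (B+1)^m := by rw [geom]

theorem stmt13 (F G Q : Polynomial ℤ) (hG : G ≠ 0) (hFQ : F = Q * G) :
    (heightZ Q : ℝ) ≤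
      ((heightZ G : ℝ) + 1) ^ (⌈((Q.support.card : ℝ) - 1) / 2⌉₊) * (heightZ F) := by
  by_cases hQ : Q = 0
  · subst hQ
    have : heightZ 0 = 0 := by simp [heightZ]
    rw [this]
    push_cast
    positivity
  obtain ⟨e, heS, hesup⟩ := Finset.exists_mem_eq_sup Q.support
    (Polynomial.support_nonempty.mpr hQ) (fun i => (Q.coeff i).natAbs)
  set clo := (Q.support.filter (· < e)).card with hclo
  set chi := (Q.support.filter (fun k => e < k)).card with hchi
  have heNotLo : e ∉ Q.support.filter (fun k => e < k) := by simp
  have hcount : clo + chi + 1 = Q.support.card := by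
    have h1 := Finset.card_filter_add_card_filter_not
      (s := Q.support) (p := (· < e))
    have h2 : Q.support.filter (fun k => ¬ k < e) =
        insert e (Q.support.filter (fun k => e < k)) := by
      ext x
      simp only [Finset.mem_filter, Finset.mem_insert]
      constructor
      · rintro ⟨hx, hxe⟩
        rcases Nat.lt_or_ge e x with h | h
        · exact Or.inr ⟨hx, h⟩
        · exact Or.inl (by omega)
      · rintro (rfl | ⟨hx, hxe⟩)
        · exact ⟨heS, by omega⟩
        · exact ⟨hx, by omega⟩
    rw [h2, Finset.card_insert_of_notMem heNotLo] at h1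
    omega
  set k0 := min clo chi with hk0def
  have hbound : |Q.coeff e| ≤ (heightZ F : ℤ) * ((heightZ G : ℤ) + 1) ^ k0 := by
    rcases le_total clo chi with h | h
    · rw [hk0def, min_eq_left h]
      exact low_bound F G Q hG hFQ e
    · rw [hk0def, min_eq_right h]
      exact high_bound F G Q hG hFQ chi e le_rfl
  set N := ⌈((Q.support.card : ℝ) - 1) / 2⌉₊ with hN
  have hk0N : k0 ≤ N := by
    have h2 : 2 * k0 ≤ clo + chi := by omega
    have hk0r : (k0 : ℝ) ≤ ((Q.support.card : ℝ) - 1) / 2 := by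
      have hT : (Q.support.card : ℝ) = (clo : ℝ) + chi + 1 := by exact_mod_cast hcount.symm
      have h2r : 2 * (k0 : ℝ) ≤ (clo : ℝ) + chi := by exact_mod_cast h2
      rw [hT]; linarith
    have h3 : (k0 : ℝ) ≤ (N : ℝ) := le_trans hk0r (Nat.le_ceil _)
    exact_mod_cast h3
  have hQe : (heightZ Q : ℝ) = |(Q.coeff e : ℝ)| := by
    rw [heightZ, hesup, Nat.cast_natAbs]
    exact Int.cast_abs
  have hb' : |(Q.coeff e : ℝ)| ≤ (heightZ F : ℝ) * ((heightZ G : ℝ) + 1) ^ k0 := by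
    exact_mod_cast hbound
  rw [hQe]
  refine le_trans hb' ?_
  have h1 : (1 : ℝ) ≤ (heightZ G : ℝ) + 1 := by
    linarith [Nat.cast_nonneg (α := ℝ) (heightZ G)]
  calc (heightZ F : ℝ) * ((heightZ G : ℝ) + 1) ^ k0
      = ((heightZ G : ℝ) + 1) ^ k0 * (heightZ F : ℝ) := by ring
    _ ≤ ((heightZ G : ℝ) + 1) ^ N * (heightZ F : ℝ) := by
        apply mul_le_mul_of_nonneg_right (pow_le_pow_right₀ h1 hk0N)
        positivity
end

section
/- Let F, G ∈ ℤ[X] with G ≠ 0 and leading coefficient of G dividing all intermediate leading coefficients so that the Euclidean division stays integral (e.g., G monic). In the Euclidean division remainder sequence R_i = R_{i−1} − q_i X^{e_i} G (with R_0 = F), each remainder satisfies ‖R_i‖ ≤ ‖F‖·(1 + ‖G‖)^i. -/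
open Polynomial

lemma coeff_natAbs_le_heightZ (P : Polynomial ℤ) (n : ℕ) :
    (P.coeff n).natAbs ≤ heightZ P := by
  by_cases h : n ∈ P.support
  · exact Finset.le_sup (f := fun i => (P.coeff i).natAbs) h
  · simp [Polynomial.notMem_support_iff.mp h]

lemma heightZ_le {P : Polynomial ℤ} {B : ℕ} (h : ∀ n, (P.coeff n).natAbs ≤ B) :
    heightZ P ≤ B :=
  Finset.sup_le fun i _ => h i

lemma step_bound (P G : Polynomial ℤ) (e : ℕ) :
    heightZ (P - Polynomial.C P.leadingCoeff * X ^ e * G)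
      ≤ heightZ P * (1 + heightZ G) := by
  apply heightZ_le
  intro n
  have hco : (Polynomial.C P.leadingCoeff * X ^ e * G).coeff n
      = if e ≤ n then P.leadingCoeff * G.coeff (n - e) else 0 := by
    have : Polynomial.C P.leadingCoeff * X ^ e * G
        = Polynomial.C P.leadingCoeff * G * X ^ e := by ring
    rw [this, Polynomial.coeff_mul_X_pow']
    simp [Polynomial.coeff_C_mul]
  rw [Polynomial.coeff_sub, hco]
  have hlc : (P.leadingCoeff).natAbs ≤ heightZ P :=
    coeff_natAbs_le_heightZ P P.natDegree
  have hP : (P.coeff n).natAbs ≤ heightZ P := coeff_natAbs_le_heightZ P n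
  split_ifs with h
  · calc (P.coeff n - P.leadingCoeff * G.coeff (n - e)).natAbs
        ≤ (P.coeff n).natAbs + (P.leadingCoeff * G.coeff (n - e)).natAbs :=
          Int.natAbs_sub_le _ _
    _ ≤ heightZ P + heightZ P * heightZ G := by
        rw [Int.natAbs_mul]
        exact Nat.add_le_add hP
          (Nat.mul_le_mul hlc (coeff_natAbs_le_heightZ G _))
    _ = heightZ P * (1 + heightZ G) := by ring
  · simp only [sub_zero]
    calc (P.coeff n).natAbs ≤ heightZ P := hP
    _ ≤ heightZ P * (1 + heightZ G) := Nat.le_mul_of_pos_right _ (by omega)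

theorem stmt14 (F G : Polynomial ℤ) (R : ℕ → Polynomial ℤ) (hG : G.Monic)
    (h0 : R 0 = F)
    (hstep : ∀ i, ∃ e : ℕ,
      R (i + 1) = R i - Polynomial.C ((R i).leadingCoeff) * X ^ e * G) :
    ∀ i, (heightZ (R i) : ℝ) ≤ (heightZ F : ℝ) * (1 + (heightZ G : ℝ)) ^ i := by
  have key : ∀ i, heightZ (R i) ≤ heightZ F * (1 + heightZ G) ^ i := by
    intro i
    induction i with
    | zero => simp [h0]
    | succ n ih =>
      obtain ⟨e, he⟩ := hstep n
      calc heightZ (R (n + 1)) ≤ heightZ (R n) * (1 + heightZ G) := by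
            rw [he]; exact step_bound _ _ _
        _ ≤ heightZ F * (1 + heightZ G) ^ n * (1 + heightZ G) :=
            Nat.mul_le_mul_right _ ih
        _ = heightZ F * (1 + heightZ G) ^ (n + 1) := by ring
  intro i
  have := key i
  calc (heightZ (R i) : ℝ) ≤ ((heightZ F * (1 + heightZ G) ^ i : ℕ) : ℝ) := by
        exact_mod_cast this
    _ = (heightZ F : ℝ) * (1 + (heightZ G : ℝ)) ^ i := by push_cast; ring
end

section
/- Over a field K, for F = X^{m+n−1} − 1 and G = X^m − X^{m−1} + 1 with n ≤ m, the Euclidean quotient of F by G is Σ_{i=0}^{n−1} X^i (hence has n nonzero terms, i.e., is maximally dense). -/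
open Polynomial

theorem stmt16 {K : Type*} [Field K] (m n : ℕ) (hn : 1 ≤ n) (hnm : n ≤ m) :
    (X ^ (m + n - 1) - 1 : K[X]) /ₘ (X ^ m - X ^ (m - 1) + 1) =
      ∑ i ∈ Finset.range n, X ^ i := by
  obtain ⟨k, rfl⟩ : ∃ k, m = k + 1 := ⟨m - 1, by omega⟩
  have hm1 : k + 1 - 1 = k := rfl
  have hmn : k + 1 + n - 1 = k + n := by omega
  rw [hm1, hmn]
  set G : K[X] := X ^ (k + 1) - X ^ k + 1 with hG
  have hGeq : G = X ^ (k + 1) + (1 - X ^ k) := by ring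
  have hdk : (1 - X ^ k : K[X]).degree ≤ (k : ℕ) := by
    refine le_trans (degree_sub_le _ _) (max_le ?_ ?_)
    · exact le_trans degree_one_le (by exact_mod_cast Nat.cast_nonneg' k)
    · simp [degree_X_pow]
  have hdk' : (1 - X ^ k : K[X]).degree < ((k + 1 : ℕ) : WithBot ℕ) :=
    lt_of_le_of_lt hdk (by exact_mod_cast Nat.lt_succ_self k)
  have hGmonic : G.Monic := by
    rw [hGeq]; exact monic_X_pow_add hdk'
  have hGdeg : G.degree = (k + 1 : ℕ) := by
    rw [hGeq]
    rw [degree_add_eq_left_of_degree_lt]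
    · exact degree_X_pow _
    · rw [degree_X_pow]; exact hdk'
  set Q : K[X] := ∑ i ∈ Finset.range n, X ^ i with hQ
  set R : K[X] := X ^ k - 1 - Q with hR
  have key : R + G * Q = X ^ (k + n) - 1 := by
    have hgeom : Q * (X - 1) = X ^ n - 1 := geom_sum_mul X n
    have : G * Q = X ^ k * (Q * (X - 1)) + Q := by ring
    rw [hR, this, hgeom, pow_add]
    ring
  have hRdeg : R.degree < G.degree := by
    rw [hGdeg, hR]
    refine lt_of_le_of_lt (degree_sub_le _ _) (max_lt ?_ ?_)
    · refine lt_of_le_of_lt (degree_sub_le _ _) (max_lt ?_ ?_)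
      · rw [degree_X_pow]; exact_mod_cast Nat.lt_succ_self k
      · exact lt_of_le_of_lt degree_one_le (by exact_mod_cast Nat.succ_pos k)
    · refine lt_of_le_of_lt (degree_sum_le _ _) ?_
      rw [Finset.sup_lt_iff (WithBot.bot_lt_coe _)]
      intro i hi
      rw [degree_X_pow]
      exact_mod_cast lt_of_lt_of_le (Finset.mem_range.mp hi) hnm
  exact (div_modByMonic_unique Q R hGmonic ⟨key, hRdeg⟩).1
end

section
/- Let Q be a polynomial over a field with sparsity at most T and let p₁, ..., p_γ be pairwise distinct primes. If a nonzero monomial c·X^e of Q does not collide with any other monomial of Q modulo X^{p_i} − 1 for any i (i.e., e is the unique exponent of supp(Q) congruent to e mod p_i for each i), and ∏ p_i > deg(Q), then e is uniquely determined by its residues e mod p_i via the Chinese Remainder Theorem, and the coefficient of X^{e mod p_i} in Q mod (X^{p_i}−1) equals c for every i. -/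
open Polynomial

lemma Xpow_mod {K : Type*} [Field K] {n : ℕ} (hn : 0 < n) (e : ℕ) :
    (X ^ e : K[X]) %ₘ (X ^ n - 1) = X ^ (e % n) := by
  have hmonic : (X ^ n - 1 : K[X]).Monic := by
    simpa using monic_X_pow_sub_C (1 : K) hn.ne'
  have hdvd : (X ^ n - 1 : K[X]) ∣ X ^ e - X ^ (e % n) := by
    have h1 : (X ^ n - 1 : K[X]) ∣ (X ^ n) ^ (e / n) - 1 := by
      simpa using sub_dvd_pow_sub_pow (X ^ n : K[X]) 1 (e / n)
    have h2 : (X ^ e - X ^ (e % n) : K[X]) = X ^ (e % n) * ((X ^ n) ^ (e / n) - 1) := by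
      rw [mul_sub, mul_one, ← pow_mul, ← pow_add]
      congr 2
      rw [Nat.add_comm, Nat.div_add_mod]
    rw [h2]
    exact Dvd.dvd.mul_left h1 _
  have h0 : (X ^ e - X ^ (e % n) : K[X]) %ₘ (X ^ n - 1) = 0 :=
    (modByMonic_eq_zero_iff_dvd hmonic).mpr hdvd
  have hself : (X ^ (e % n) : K[X]) %ₘ (X ^ n - 1) = X ^ (e % n) := by
    rw [modByMonic_eq_self_iff hmonic]
    have hdeg : (X ^ n - 1 : K[X]).degree = n := by
      simpa using degree_X_pow_sub_C hn (1 : K)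
    rw [hdeg, degree_X_pow]
    exact_mod_cast Nat.mod_lt e hn
  have key : (X ^ e : K[X]) = (X ^ e - X ^ (e % n)) + X ^ (e % n) := by ring
  rw [key, add_modByMonic, h0, hself, zero_add]

theorem stmt19 {K : Type*} [Field K] (Q : K[X]) (T γ : ℕ) (p : Fin γ → ℕ)
    (hT : Q.support.card ≤ T) (hprime : ∀ i, Nat.Prime (p i))
    (hdist : Function.Injective p) (e : ℕ) (he : e ∈ Q.support) (c : K)
    (hc : c = Q.coeff e)
    (hnocol : ∀ i, ∀ e' ∈ Q.support, e' % p i = e % p i → e' = e)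
    (hprod : Q.natDegree < ∏ i, p i) :
    (∀ e' : ℕ, e' ≤ Q.natDegree → (∀ i, e' % p i = e % p i) → e' = e) ∧
    ∀ i, (Q %ₘ (X ^ (p i) - 1)).coeff (e % p i) = c := by
  have hele : e ≤ Q.natDegree := le_natDegree_of_mem_supp e he
  constructor
  · intro e' he' hmod
    have hpd : (∏ i, (p i : ℤ)) ∣ (e' : ℤ) - e := by
      apply Finset.prod_dvd_of_coprime
      · intro i _ j _ hij
        exact Nat.isCoprime_iff_coprime.mpr
          ((Nat.coprime_primes (hprime i) (hprime j)).mpr fun h => hij (hdist h))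
      · intro i _
        have hm : Nat.ModEq (p i) e' e := hmod i
        have h : (p i : ℤ) ∣ (e : ℤ) - e' := hm.dvd
        have : ((e' : ℤ) - e) = -((e : ℤ) - e') := by ring
        rw [this]
        exact h.neg_right
    have habs : |(e' : ℤ) - e| < ∏ i, (p i : ℤ) := by
      have hP : ((Q.natDegree : ℤ)) < ∏ i, (p i : ℤ) := by
        rw [← Nat.cast_prod]; exact_mod_cast hprod
      have h1 : (e' : ℤ) ≤ Q.natDegree := by exact_mod_cast he'
      have h2 : (e : ℤ) ≤ Q.natDegree := by exact_mod_cast hele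
      rw [abs_sub_lt_iff]
      constructor <;> omega
    have := Int.eq_zero_of_abs_lt_dvd hpd habs
    omega
  · intro i
    have hpi : 0 < p i := (hprime i).pos
    have hQ : Q %ₘ (X ^ (p i) - 1) =
        ∑ e' ∈ Q.support, Q.coeff e' • (X : K[X]) ^ (e' % p i) := by
      have hrw : ∀ r : K[X], r %ₘ (X ^ (p i) - 1) = modByMonicHom (X ^ (p i) - 1) r :=
        fun r => rfl
      conv_lhs => rw [Q.as_sum_support_C_mul_X_pow, hrw, map_sum]
      refine Finset.sum_congr rfl fun e' _ => ?_
      rw [← smul_eq_C_mul, map_smul, ← hrw, Xpow_mod hpi]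
    rw [hQ, finset_sum_coeff]
    rw [Finset.sum_eq_single e]
    · simp [hc]
    · intro e' he'm hne
      have : e' % p i ≠ e % p i := fun h => hne (hnocol i e' he'm h)
      simp [coeff_smul, coeff_X_pow, this, Ne.symm this]
    · intro h; exact absurd he h
end
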